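/- Let d ≥ 1, n ≥ 1, k ≥ 1, let V be a finite-dimensional complex inner product space, and let Φ_{A,a} (A ∈ Fin k, a ∈ Fin d) be vectors in V satisfying the MUB Gram condition ⟨Φ_{A,a}, Φ_{A',a'}⟩ = δ_{A,A'}δ_{a,a'} + (1−δ_{A,A'})/d; set Φ = (1/√d)·Σ_{a} Φ_{0,a}. Suppose e ∈ V and t : Fin k → Fin d satisfy ⟨Φ_{A,a}, e⟩ = (1/√(n·d))·δ_{a, t(A)} for all A ∈ Fin k and a ∈ Fin d. Then the orthogonal projection of e onto span{Φ_{A,a} : A ∈ Fin k, a ∈ Fin d} equals (1/√n)·[ (1/√d)·Σ_{A=0}^{k−1} Φ_{A, t(A)} − ((k−1)/d)·Φ ]. -/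

import Mathlib

open scoped InnerProductSpace

/-- **Explicit formula for Alice's basis vectors (Eq. (9) of the paper).**
If `⟪Φ_{A,a}, e⟫ = δ_{a,t(A)}/√(nd)` for all `A, a`, then the orthogonal projection
of `e` onto `span{Φ_{A,a}}` equals
`(1/√n)·[(1/√d)·Σ_A Φ_{A,t(A)} − ((k−1)/d)·Φ]`. -/
theorem projection_formula_for_alice_basis
    (d n k : ℕ) (hd : 1 ≤ d) (hn : 1 ≤ n) (hk : 1 ≤ k)
    (V : Type*) [NormedAddCommGroup V] [InnerProductSpace ℂ V]
    [FiniteDimensional ℂ V]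
    (Φ : Fin k → Fin d → V)
    (hGram : ∀ (A A' : Fin k) (a a' : Fin d),
      ⟪Φ A a, Φ A' a'⟫_ℂ =
        if A = A' then (if a = a' then 1 else 0) else 1 / (d : ℂ))
    (Φ₀ : V) (hΦ₀ : Φ₀ = (1 / Real.sqrt d : ℂ) • ∑ a : Fin d, Φ ⟨0, hk⟩ a)
    (e : V) (t : Fin k → Fin d)
    (he : ∀ (A : Fin k) (a : Fin d),
      ⟪Φ A a, e⟫_ℂ = if t A = a then (1 / Real.sqrt (n * d) : ℂ) else 0) :
    (Submodule.orthogonalProjection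
        (Submodule.span ℂ (Set.range (fun p : Fin k × Fin d => Φ p.1 p.2))) e : V) =
      (1 / Real.sqrt n : ℂ) •
        ((1 / Real.sqrt d : ℂ) • (∑ A : Fin k, Φ A (t A)) -
          (((k : ℂ) - 1) / (d : ℂ)) • Φ₀) := by
  set K := Submodule.span ℂ (Set.range fun p : Fin k × Fin d => Φ p.1 p.2) with hK
  have hdR : (0:ℝ) < d := by exact_mod_cast hd
  have hnR : (0:ℝ) < n := by exact_mod_cast hn
  have hsd : Real.sqrt d ≠ 0 := ne_of_gt (Real.sqrt_pos.mpr hdR)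
  have hsn : Real.sqrt n ≠ 0 := ne_of_gt (Real.sqrt_pos.mpr hnR)
  have hsdC : ((Real.sqrt d : ℝ) : ℂ) ≠ 0 := by exact_mod_cast hsd
  have hsnC : ((Real.sqrt n : ℝ) : ℂ) ≠ 0 := by exact_mod_cast hsn
  have hdC : (d:ℂ) ≠ 0 := by exact_mod_cast hdR.ne'
  set v : V := (1 / Real.sqrt n : ℂ) •
        ((1 / Real.sqrt d : ℂ) • (∑ A : Fin k, Φ A (t A)) -
          (((k : ℂ) - 1) / (d : ℂ)) • Φ₀) with hv
  have hmem : ∀ A a, Φ A a ∈ K := fun A a => Submodule.subset_span ⟨(A, a), rfl⟩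
  have hvK : v ∈ K := by
    refine K.smul_mem _ (K.sub_mem (K.smul_mem _
      (Submodule.sum_mem _ fun A _ => hmem A (t A))) (K.smul_mem _ ?_))
    rw [hΦ₀]
    exact K.smul_mem _ (Submodule.sum_mem _ fun a _ => hmem _ a)
  have key : ∀ (A : Fin k) (a : Fin d), ⟪Φ A a, v⟫_ℂ = ⟪Φ A a, e⟫_ℂ := by
    intro A a
    have h1 : ⟪Φ A a, ∑ B : Fin k, Φ B (t B)⟫_ℂ
        = (if t A = a then 1 else 0) + ((k:ℂ)-1)/(d:ℂ) := by
      rw [inner_sum, ← Finset.add_sum_erase _ _ (Finset.mem_univ A)]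
      have h2 : ∑ B ∈ Finset.univ.erase A, ⟪Φ A a, Φ B (t B)⟫_ℂ
          = ((k:ℂ)-1)/(d:ℂ) := by
        have hterm : ∀ B ∈ Finset.univ.erase A, ⟪Φ A a, Φ B (t B)⟫_ℂ = 1/(d:ℂ) := by
          intro B hB
          rw [hGram]
          simp [(Finset.ne_of_mem_erase hB).symm]
        rw [Finset.sum_congr rfl hterm, Finset.sum_const]
        have hcard : (Finset.univ.erase A).card = k - 1 := by simp
        rw [hcard, nsmul_eq_mul, Nat.cast_sub hk]
        push_cast
        ring
      rw [h2, hGram]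
      simp [eq_comm (a := a) (b := t A)]
    have h3 : ⟪Φ A a, Φ₀⟫_ℂ = (1 / Real.sqrt d : ℂ) := by
      rw [hΦ₀, inner_smul_right, inner_sum]
      have h4 : ∑ b : Fin d, ⟪Φ A a, Φ ⟨0, hk⟩ b⟫_ℂ = 1 := by
        by_cases hA : A = ⟨0, hk⟩
        · subst hA
          simp [hGram]
        · have hterm : ∀ b : Fin d, ⟪Φ A a, Φ ⟨0, hk⟩ b⟫_ℂ = 1/(d:ℂ) := fun b => by
            rw [hGram]; simp [hA]
          simp only [hterm, Finset.sum_const, Finset.card_univ, Fintype.card_fin,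
            nsmul_eq_mul]
          field_simp
      rw [h4, mul_one]
    rw [hv, inner_smul_right, inner_sub_right, inner_smul_right, inner_smul_right,
      h1, h3, he]
    have hnd : ((Real.sqrt (n * d) : ℝ) : ℂ) = Real.sqrt n * Real.sqrt d := by
      push_cast [Real.sqrt_mul (Nat.cast_nonneg n)]
      ring
    by_cases h : t A = a
    · simp only [h, if_true]
      rw [hnd]
      field_simp
      ring
    · simp only [h, if_false]
      ring
  refine (Submodule.starProjection_apply K e).symm.trans
    (Submodule.eq_starProjection_of_mem_of_inner_eq_zero hvK fun w hw => ?_)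
  induction hw using Submodule.span_induction with
  | mem x hx =>
      obtain ⟨⟨A, a⟩, rfl⟩ := hx
      have h := key A a
      simp only [inner_sub_left, sub_eq_zero]
      rw [← inner_conj_symm, ← inner_conj_symm v, h]
  | zero => simp
  | add x y _ _ hx hy => rw [inner_add_right, hx, hy, add_zero]
  | smul c x _ hx => rw [inner_smul_right, hx, mul_zero]
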